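/- Let X be a random variable with bounded support (0,l), cumulative distribution function F, and finite CE_α(X). Then for every 0 < α ≤ 1, CE_α(X) ≤ (l/Γ(α+1)) (α/e)^α. -/

import Mathlib

open MeasureTheory Set
open scoped ProbabilityTheory

lemma fgce_pointwise (α : ℝ) (hα : 0 < α) (u : ℝ) (hu0 : 0 ≤ u) (hu1 : u ≤ 1) :
    u * (-Real.log u) ^ α ≤ (α / Real.exp 1) ^ α := by
  have hrhs : (α / Real.exp 1) ^ α = Real.exp (α * Real.log α - α) := by
    rw [Real.rpow_def_of_pos (by positivity), Real.log_div hα.ne' (Real.exp_ne_zero 1),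
      Real.log_exp]
    ring_nf
  rcases eq_or_lt_of_le hu0 with h0 | h0
  · rw [← h0]
    simp [Real.log_zero, Real.zero_rpow hα.ne']
    positivity
  rcases eq_or_lt_of_le hu1 with h1 | h1
  · rw [h1]
    simp [Real.log_one, Real.zero_rpow hα.ne']
    positivity
  set t : ℝ := -Real.log u with ht
  have htpos : 0 < t := by
    have := Real.log_neg h0 h1
    simp [ht]; linarith
  have hu : u = Real.exp (-t) := by
    rw [ht, neg_neg, Real.exp_log h0]
  have hlhs : u * t ^ α = Real.exp (α * Real.log t - t) := by
    rw [hu, Real.rpow_def_of_pos htpos, ← Real.exp_add]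
    ring_nf
  rw [hlhs, hrhs, Real.exp_le_exp]
  have hkey : Real.log (t / α) ≤ t / α - 1 := Real.log_le_sub_one_of_pos (by positivity)
  rw [Real.log_div htpos.ne' hα.ne'] at hkey
  have := mul_le_mul_of_nonneg_left hkey hα.le
  have heq : α * (t / α - 1) = t - α := by field_simp
  nlinarith

/-- for a random variable `X` with bounded support `(0,l)`, CDF `F`, and
finite `CE_α(X)`, for every `0 < α ≤ 1` one has
`CE_α(X) ≤ (l/Γ(α+1)) (α/e)^α`. -/
theorem fgce_upper_bound
    {Ω : Type*} [MeasureSpace Ω] [IsProbabilityMeasure (ℙ : Measure Ω)]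
    (X : Ω → ℝ) (hX : Measurable X)
    (l : ℝ) (hl : 0 < l)
    (hsupp : ∀ᵐ ω ∂ℙ, X ω ∈ Set.Ioo 0 l)
    (F : ℝ → ℝ) (hF : ∀ x, F x = (ℙ {ω | X ω ≤ x}).toReal)
    (α : ℝ) (hα : 0 < α) (hα1 : α ≤ 1)
    (hCEfin : IntegrableOn (fun x => F x * (-Real.log (F x)) ^ α) (Set.Ioo (0:ℝ) l)) :
    (1 / Real.Gamma (α + 1)) * ∫ x in Set.Ioo (0:ℝ) l, F x * (-Real.log (F x)) ^ α
      ≤ l / Real.Gamma (α + 1) * (α / Real.exp 1) ^ α := by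
  have hΓ : 0 < Real.Gamma (α + 1) := Real.Gamma_pos_of_pos (by linarith)
  have hbound : ∀ x, F x * (-Real.log (F x)) ^ α ≤ (α / Real.exp 1) ^ α := by
    intro x
    apply fgce_pointwise α hα
    · rw [hF x]; exact ENNReal.toReal_nonneg
    · rw [hF x]
      exact ENNReal.toReal_le_of_le_ofReal one_pos.le (by simpa using prob_le_one)
  have hfin : volume (Set.Ioo (0:ℝ) l) < ⊤ := by
    simp [Real.volume_Ioo]
  have hint : ∫ x in Set.Ioo (0:ℝ) l, F x * (-Real.log (F x)) ^ α
      ≤ ∫ _x in Set.Ioo (0:ℝ) l, (α / Real.exp 1) ^ α := by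
    apply setIntegral_mono_on hCEfin (integrableOn_const hfin.ne) measurableSet_Ioo
    exact fun x _ => hbound x
  have hconst : ∫ _x in Set.Ioo (0:ℝ) l, (α / Real.exp 1) ^ α
      = l * (α / Real.exp 1) ^ α := by
    rw [setIntegral_const, measureReal_def, Real.volume_Ioo, smul_eq_mul, sub_zero,
      ENNReal.toReal_ofReal hl.le]
  have := mul_le_mul_of_nonneg_left (hint.trans_eq hconst) (by positivity : (0:ℝ) ≤ 1 / Real.Gamma (α + 1))
  calc (1 / Real.Gamma (α + 1)) * ∫ x in Set.Ioo (0:ℝ) l, F x * (-Real.log (F x)) ^ α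
      ≤ 1 / Real.Gamma (α + 1) * (l * (α / Real.exp 1) ^ α) := this
    _ = l / Real.Gamma (α + 1) * (α / Real.exp 1) ^ α := by ring
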